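/- For every non-negative integer n there exists a finite structure A with a single ternary relation symbol such that tw(G_A) = 2 and ucw(A) > n. Hence unary clique-width is not bounded by any function of tree-width on structures with a ternary relation. -/

import Mathlib

/-- A relational signature: a type of relation symbols with arities. -/
structure Signature where
  symbols : Type
  ar : symbols → ℕ

/-- A coloured σ-structure: a carrier, interpretations of the relation
symbols, and a colouring of the elements by natural numbers. -/
structure CStruc (σ : Signature) where
  carrier : Type
  rel : ∀ R : σ.symbols, (Fin (σ.ar R) → carrier) → Prop
  col : carrier → ℕ

/-- Isomorphism of coloured structures. -/
structure CIso {σ : Signature} (A B : CStruc σ) where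
  toEquiv : A.carrier ≃ B.carrier
  rel_iff : ∀ (R : σ.symbols) (t : Fin (σ.ar R) → A.carrier),
    A.rel R t ↔ B.rel R fun i => toEquiv (t i)
  col_eq : ∀ a, B.col (toEquiv a) = A.col a

/-- Disjoint union of coloured structures. -/
def CStruc.union {σ : Signature} (A B : CStruc σ) : CStruc σ where
  carrier := A.carrier ⊕ B.carrier
  rel R t := (∃ s, (∀ i, t i = Sum.inl (s i)) ∧ A.rel R s) ∨
             (∃ s, (∀ i, t i = Sum.inr (s i)) ∧ B.rel R s)
  col := Sum.elim A.col B.col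

/-- Recolouring of a coloured structure. -/
def CStruc.recolor {σ : Signature} (A : CStruc σ) (f : ℕ → ℕ) : CStruc σ where
  carrier := A.carrier
  rel := A.rel
  col := f ∘ A.col

/-- Introduce into the relation `R` all tuples whose colours match `c`. -/
def CStruc.introduce {σ : Signature} (A : CStruc σ) (R : σ.symbols)
    (c : Fin (σ.ar R) → ℕ) : CStruc σ where
  carrier := A.carrier
  rel S t := A.rel S t ∨ ∃ h : S = R, ∀ i : Fin (σ.ar R),
    A.col (t (Fin.cast (congrArg σ.ar h).symm i)) = c i
  col := A.col

/-- The class UCW_k[σ]: coloured structures of unary clique-width at most `k`,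
generated from empty structures and relation-free singletons of colour 0 by
disjoint union, recolouring (by functions on the colours `< k`), and
introduction of a relation along a tuple of colours, closed under isomorphism. -/
inductive UCW (σ : Signature) (k : ℕ) : CStruc σ → Prop where
  | empty (A : CStruc σ) (h : IsEmpty A.carrier) : UCW σ k A
  | single (hk : 0 < k) (A : CStruc σ) (hsub : ∀ a b : A.carrier, a = b)
      (hne : Nonempty A.carrier)
      (hrel : ∀ (R : σ.symbols) (t : Fin (σ.ar R) → A.carrier), ¬ A.rel R t)
      (hcol : ∀ a, A.col a = 0) : UCW σ k A
  | union {A B : CStruc σ} : UCW σ k A → UCW σ k B → UCW σ k (A.union B)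
  | recolor {A : CStruc σ} (f : ℕ → ℕ) (hf : ∀ i, i < k → f i < k) :
      UCW σ k A → UCW σ k (A.recolor f)
  | introduce {A : CStruc σ} (R : σ.symbols) (c : Fin (σ.ar R) → ℕ)
      (hc : ∀ i, c i < k) : UCW σ k A → UCW σ k (A.introduce R c)
  | iso {A B : CStruc σ} (e : CIso A B) : UCW σ k A → UCW σ k B

/-- Unary clique-width: the least `k` such that the structure is in UCW_k[σ]. -/
noncomputable def ucw {σ : Signature} (A : CStruc σ) : ℕ := sInf {k | UCW σ k A}

/-- The Gaifman graph of a structure: distinct elements are adjacent iff they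
occur together in some tuple of some relation. -/
def CStruc.gaifman {σ : Signature} (A : CStruc σ) : SimpleGraph A.carrier where
  Adj a b := a ≠ b ∧ ∃ (R : σ.symbols) (u : Fin (σ.ar R) → A.carrier),
    A.rel R u ∧ (∃ i, u i = a) ∧ (∃ j, u j = b)
  symm := by
    constructor
    rintro a b ⟨hne, R, u, hu, hi, hj⟩
    exact ⟨hne.symm, R, u, hu, hj, hi⟩
  loopless := by constructor; rintro a ⟨hne, -⟩; exact hne rfl

/-- A tree decomposition of `G` over an index graph `T` (intended to be a tree). -/
structure TreeDecomp {V ι : Type} (G : SimpleGraph V) (T : SimpleGraph ι) where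
  bag : ι → Set V
  mem_bag : ∀ v, ∃ i, v ∈ bag i
  mem_edge : ∀ u v, G.Adj u v → ∃ i, u ∈ bag i ∧ v ∈ bag i
  subtree : ∀ v : V, (T.induce {i | v ∈ bag i}).Connected

/-- `G` has tree-width at most `w`. -/
def twLe {V : Type} (G : SimpleGraph V) (w : ℕ) : Prop :=
  ∃ (ι : Type) (T : SimpleGraph ι), T.IsTree ∧
    ∃ D : TreeDecomp G T, ∀ i, (D.bag i).ncard ≤ w + 1

/-- The tree-width of `G`. -/
noncomputable def tw {V : Type} (G : SimpleGraph V) : ℕ := sInf {w | twLe G w}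

/-- The signature of graphs: one binary relation symbol `E`. -/
abbrev sigGraph : Signature := ⟨Unit, fun _ => 2⟩
/-- A signature with a single ternary relation symbol `R`. -/
abbrev sigTernary : Signature := ⟨Unit, fun _ => 3⟩

/-- The structure `A'` of the paper: universe `A ⊔ {t}` (with `t = Sum.inr ()`),
and `R a c b` iff `a ≠ b`, `c ∈ {a, b}`, and (`E a b` holds in `A` or `a = t`). -/
def prime (A : CStruc sigGraph) : CStruc sigTernary where
  carrier := A.carrier ⊕ Unit
  rel := fun _ u => u 0 ≠ u 2 ∧ (u 1 = u 0 ∨ u 1 = u 2) ∧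
    ((∃ a b : A.carrier, u 0 = Sum.inl a ∧ u 2 = Sum.inl b ∧ A.rel () ![a, b]) ∨
      u 0 = Sum.inr ())
  col := fun _ => 0



def Vt : ℕ → Type
  | 0 => Unit
  | (h+1) => Unit ⊕ (Fin 3 × Vt h)

instance vtFintype : ∀ h, Fintype (Vt h)
  | 0 => inferInstanceAs (Fintype Unit)
  | (h+1) => letI := vtFintype h; inferInstanceAs (Fintype (Unit ⊕ (Fin 3 × Vt h)))

instance vtDecEq : ∀ h, DecidableEq (Vt h)
  | 0 => inferInstanceAs (DecidableEq Unit)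
  | (h+1) => letI := vtDecEq h; inferInstanceAs (DecidableEq (Unit ⊕ (Fin 3 × Vt h)))

def roott : ∀ h, Vt h
  | 0 => ()
  | (_+1) => Sum.inl ()

def part : ∀ h, Vt h → Vt h
  | 0, _ => ()
  | (_+1), Sum.inl _ => Sum.inl ()
  | (h+1), Sum.inr (i, v) =>
      if v = roott h then Sum.inl () else Sum.inr (i, part h v)

def deptht : ∀ h, Vt h → ℕ
  | 0, _ => 0
  | (_+1), Sum.inl _ => 0
  | (h+1), Sum.inr (_, v) => deptht h v + 1

lemma part_root (h : ℕ) : part h (roott h) = roott h := by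
  cases h <;> rfl

lemma deptht_part_lt : ∀ h (v : Vt h), v ≠ roott h → deptht h (part h v) < deptht h v
  | 0, v, hv => absurd rfl hv
  | (h+1), Sum.inl (), hv => absurd rfl hv
  | (h+1), Sum.inr (i, v), _ => by
      by_cases hv : v = roott h
      · simp [part, hv, deptht]
      · simp only [part, hv, if_neg, deptht]
        exact Nat.succ_lt_succ (deptht_part_lt h v hv)

lemma part_ne (h : ℕ) (v : Vt h) (hv : v ≠ roott h) : part h v ≠ v :=
  fun he => absurd (he ▸ deptht_part_lt h v hv) (lt_irrefl _)

/-- The tree graph on `Vt h`: edges between a vertex and its parent. -/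
def Gt (h : ℕ) : SimpleGraph (Vt h) where
  Adj u v := (u ≠ roott h ∧ v = part h u) ∨ (v ≠ roott h ∧ u = part h v)
  symm := by constructor; rintro u v (h | h) <;> [right; left] <;> exact h
  loopless := by
    constructor
    rintro v (⟨hv, he⟩ | ⟨hv, he⟩) <;> exact part_ne _ v hv he.symm

lemma gt_adj_part {h : ℕ} {v : Vt h} (hv : v ≠ roott h) : (Gt h).Adj v (part h v) :=
  Or.inl ⟨hv, rfl⟩

lemma gt_reachable_root (h : ℕ) (v : Vt h) : (Gt h).Reachable v (roott h) := by
  generalize hd : deptht h v = d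
  induction d using Nat.strong_induction_on generalizing v with
  | _ d ih =>
    by_cases hv : v = roott h
    · exact hv ▸ SimpleGraph.Reachable.refl v
    · exact ((gt_adj_part hv).reachable).trans
        (ih _ (hd ▸ deptht_part_lt h v hv) _ rfl)

lemma gt_connected (h : ℕ) : (Gt h).Connected := by
  rw [SimpleGraph.connected_iff_exists_forall_reachable]
  exact ⟨roott h, fun v => (gt_reachable_root h v).symm⟩

lemma head_ne_getLast_of_nodup {α : Type*} {l : List α} (hn : l.Nodup)
    (hl : 3 ≤ l.length) (h1 : l ≠ []) : l.head h1 ≠ l.getLast h1 := by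
  match l, hn, hl with
  | a :: t, hn, hl =>
    have ht : t ≠ [] := by
      intro h; rw [h] at hl; simp at hl
    intro he
    simp only [List.head_cons] at he
    rw [List.getLast_cons ht] at he
    exact (List.nodup_cons.1 hn).1 (he ▸ List.getLast_mem ht)

lemma cycle_two_neighbors {V : Type} {G : SimpleGraph V} {u : V} {c : G.Walk u u}
    (hc : c.IsCycle) :
    ∃ x y, G.Adj u x ∧ G.Adj u y ∧ x ≠ y ∧ x ∈ c.support ∧ y ∈ c.support := by
  classical
  obtain ⟨x, hx, q, hceq⟩ : ∃ (x : V) (hx : G.Adj u x) (q : G.Walk x u),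
      c = SimpleGraph.Walk.cons hx q := by
    match c, hc with
    | .cons hx q, _ => exact ⟨_, hx, q, rfl⟩
    | .nil, hc => exact absurd rfl hc.ne_nil
  subst hceq
  obtain ⟨y, hy, q2, hreq⟩ : ∃ (y : V) (hy : G.Adj u y) (q2 : G.Walk y u),
      (SimpleGraph.Walk.cons hx q).reverse = SimpleGraph.Walk.cons hy q2 := by
    match hrev : (SimpleGraph.Walk.cons hx q).reverse, hc with
    | .cons hy q2, _ => exact ⟨_, hy, q2, rfl⟩
    | .nil, hc =>
      have h0 : (SimpleGraph.Walk.cons hx q).reverse.length = 0 := by rw [hrev]; rfl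
      rw [SimpleGraph.Walk.length_reverse] at h0
      have h3 := hc.three_le_length
      omega
  have hxmem : x ∈ (SimpleGraph.Walk.cons hx q).support := by
    simp [SimpleGraph.Walk.support_cons]
  have hymem : y ∈ (SimpleGraph.Walk.cons hx q).support := by
    have : y ∈ (SimpleGraph.Walk.cons hx q).reverse.support := by
      rw [hreq]; simp [SimpleGraph.Walk.support_cons]
    rwa [SimpleGraph.Walk.support_reverse, List.mem_reverse] at this
  refine ⟨x, y, hx, hy, ?_, hxmem, hymem⟩
  intro hxy
  have hnodup : (SimpleGraph.Walk.cons hx q).edges.Nodup := hc.edges_nodup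
  have hlen : 3 ≤ (SimpleGraph.Walk.cons hx q).edges.length := by
    rw [SimpleGraph.Walk.length_edges]; exact hc.three_le_length
  have h1 : (SimpleGraph.Walk.cons hx q).reverse.edges = s(u,y) :: q2.edges := by
    rw [hreq]; simp
  rw [SimpleGraph.Walk.edges_reverse] at h1
  have h2 : s(u,x) :: q.edges = q2.edges.reverse ++ [s(u,y)] := by
    have h2' := congrArg List.reverse h1
    simpa using h2'
  rw [SimpleGraph.Walk.edges_cons] at hnodup hlen
  cases hq2 : q2.edges.reverse with
  | nil =>
    rw [hq2] at h2
    simp only [List.nil_append, List.cons.injEq] at h2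
    rw [h2.2] at hlen
    simp at hlen
  | cons e rest =>
    rw [hq2] at h2
    simp only [List.cons_append, List.cons.injEq] at h2
    obtain ⟨he, hrest⟩ := h2
    rw [hrest] at hnodup
    have := (List.nodup_cons.1 hnodup).1
    apply this
    rw [hxy]
    simp

lemma gt_acyclic (h : ℕ) : (Gt h).IsAcyclic := by
  classical
  intro v c hc
  obtain ⟨u, hu, hmax⟩ := Finset.exists_max_image c.support.toFinset (deptht h)
    ⟨v, List.mem_toFinset.2 c.start_mem_support⟩
  rw [List.mem_toFinset] at hu
  have hmax' : ∀ x ∈ c.support, deptht h x ≤ deptht h u := fun x hx =>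
    hmax x (List.mem_toFinset.2 hx)
  have hc' := hc.rotate hu
  have hsub : ∀ x, x ∈ (c.rotate u hu).support → x ∈ c.support := by
    intro x hx
    have hrot := SimpleGraph.Walk.support_rotate c u hu
    rcases (SimpleGraph.Walk.mem_support_iff (c.rotate u hu)).1 hx with rfl | hx'
    · exact hu
    · exact c.support.mem_of_mem_tail (hrot.mem_iff.1 hx')
  obtain ⟨x, y, hx, hy, hxy, hxm, hym⟩ := cycle_two_neighbors hc'
  have hpar : ∀ z, (Gt h).Adj u z → z ∈ (c.rotate u hu).support → z = part h u := by
    intro z hz hzm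
    rcases hz with ⟨_, hzp⟩ | ⟨hz0, hup⟩
    · exact hzp
    · exact absurd (hup ▸ deptht_part_lt h z hz0) 
        (not_lt.2 (hmax' z (hsub z hzm)))
  exact hxy ((hpar x hx hxm).trans (hpar y hy hym).symm)

lemma gt_isTree (h : ℕ) : (Gt h).IsTree := ⟨gt_connected h, gt_acyclic h⟩
lemma covered_convex {V : Type} {G : SimpleGraph V} {lo hi : V → ℕ}
    (hadj : ∀ u v, G.Adj u v → lo u ≤ hi v ∧ lo v ≤ hi u) :
    ∀ {u v : V} (W : G.Walk u v) (z : ℕ), lo u ≤ z → z ≤ hi v →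
      ∃ w ∈ W.support, lo w ≤ z ∧ z ≤ hi w := by
  intro u v W
  induction W with
  | nil => intro z h1 h2; exact ⟨_, SimpleGraph.Walk.start_mem_support _, h1, h2⟩
  | @cons u x v ha W ih =>
    intro z h1 h2
    by_cases hz : z ≤ hi u
    · exact ⟨u, SimpleGraph.Walk.start_mem_support _, h1, hz⟩
    · obtain ⟨w, hw, hw2⟩ := ih z (le_trans (hadj u x ha).2 (le_of_not_ge hz)) h2
      exact ⟨w, by simp [SimpleGraph.Walk.support_cons, hw], hw2⟩

def brHom (h : ℕ) (i : Fin 3) : Gt h →g Gt (h+1) where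
  toFun v := Sum.inr (i, v)
  map_rel' := by
    rintro u v (⟨hu0, hv⟩ | ⟨hv0, hu⟩)
    · left
      constructor
      · intro hh; cases hh
      · show Sum.inr (i, v) = part (h+1) (Sum.inr (i, u))
        simp only [part, if_neg hu0, hv]
        exact (if_neg hu0).symm
    · right
      constructor
      · intro hh; cases hh
      · show Sum.inr (i, u) = part (h+1) (Sum.inr (i, v))
        simp only [part, if_neg hv0, hu]
        exact (if_neg hv0).symm

lemma adj_root_branch (h : ℕ) (i : Fin 3) :
    (Gt (h+1)).Adj (Sum.inr (i, roott h)) (Sum.inl ()) := by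
  left
  constructor
  · intro hh; cases hh
  · show Sum.inl () = part (h+1) (Sum.inr (i, roott h))
    simp [part]

lemma heavy_step (h : ℕ) (lo hi : Vt (h+1) → ℕ)
    (hadj : ∀ u v, (Gt (h+1)).Adj u v → lo u ≤ hi v ∧ lo v ≤ hi u)
    (a b c : Fin 3) (hab : b ≠ a) (hcb : b ≠ c)
    (za zb zc : ℕ) (hzab : za ≤ zb) (hzbc : zb ≤ zc)
    (va vc : Vt h) (hva : lo (Sum.inr (a, va)) ≤ za ∧ za ≤ hi (Sum.inr (a, va)))
    (hvc : lo (Sum.inr (c, vc)) ≤ zc ∧ zc ≤ hi (Sum.inr (c, vc))) :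
    ∃ w, (∀ v, w ≠ Sum.inr (b, v)) ∧ lo w ≤ zb ∧ zb ≤ hi w := by
  classical
  obtain ⟨W1⟩ := gt_reachable_root h va
  obtain ⟨W2⟩ := gt_reachable_root h vc
  let W1' := W1.map (brHom h a)
  let W2' := (W2.map (brHom h c)).reverse
  let E1 := (adj_root_branch h a)
  let E2 := ((adj_root_branch h c).symm : (Gt (h+1)).Adj (Sum.inl ()) (Sum.inr (c, roott h)))
  let W : (Gt (h+1)).Walk (Sum.inr (a, va)) (Sum.inr (c, vc)) :=
    W1'.append (SimpleGraph.Walk.cons E1 (SimpleGraph.Walk.cons E2 W2'))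
  obtain ⟨w, hwmem, hw⟩ := covered_convex hadj W zb (le_trans hva.1 hzab) (le_trans hzbc hvc.2)
  refine ⟨w, ?_, hw⟩
  intro v hv
  replace hwmem := (SimpleGraph.Walk.mem_support_append_iff W1' _).1 hwmem
  rcases hwmem with hm | hm
  · rw [SimpleGraph.Walk.support_map, List.mem_map] at hm
    obtain ⟨x, _, hx⟩ := hm
    rw [hv] at hx
    exact hab (congrArg (fun s => Sum.elim (fun _ => b) Prod.fst s) hx.symm)
  · change w ∈ _ :: _ :: W2'.support at hm
    replace hm := (List.mem_cons.1 hm).imp_right List.mem_cons.1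
    rcases hm with hm | hm | hm
    · rw [hv] at hm
      exact hab (congrArg (fun s => Sum.elim (fun _ => b) Prod.fst s) hm)
    · cases hv.symm.trans hm
    · have hm' : ∃ x, (brHom h c) x = w := by
        rw [SimpleGraph.Walk.support_reverse, List.mem_reverse,
          SimpleGraph.Walk.support_map, List.mem_map] at hm
        obtain ⟨x, _, hx⟩ := hm
        exact ⟨x, hx⟩
      obtain ⟨x, hx⟩ := hm'
      rw [hv] at hx
      exact hcb (congrArg (fun s => Sum.elim (fun _ => b) Prod.fst s) hx.symm)

lemma heavy : ∀ (h : ℕ) (lo hi : Vt h → ℕ),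
    (∀ u v, (Gt h).Adj u v → lo u ≤ hi v ∧ lo v ≤ hi u) →
    (∀ v, lo v ≤ hi v) →
    ∃ (z : ℕ) (S : Finset (Vt h)), S.card = h + 1 ∧ ∀ v ∈ S, lo v ≤ z ∧ z ≤ hi v := by
  intro h
  induction h with
  | zero =>
    intro lo hi _ hne
    exact ⟨lo (), {()}, rfl, by rintro ⟨⟩ -; exact ⟨le_refl _, hne ()⟩⟩
  | succ h ih =>
    intro lo hi hadj hne
    classical
    -- apply ih to each branch
    have key : ∀ i : Fin 3, ∃ (z : ℕ) (S : Finset (Vt h)), S.card = h + 1 ∧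
        ∀ v ∈ S, lo (Sum.inr (i, v)) ≤ z ∧ z ≤ hi (Sum.inr (i, v)) := by
      intro i
      exact ih (fun v => lo (Sum.inr (i, v))) (fun v => hi (Sum.inr (i, v)))
        (fun u v huv => hadj _ _ ((brHom h i).map_rel huv))
        (fun v => hne _)
    obtain ⟨z0, S0, hS0c, hS0⟩ := key 0
    obtain ⟨z1, S1, hS1c, hS1⟩ := key 1
    obtain ⟨z2, S2, hS2c, hS2⟩ := key 2
    -- pick elements of the two outer sets
    have hne0 : S0.Nonempty := Finset.card_pos.1 (by omega)
    have hne1 : S1.Nonempty := Finset.card_pos.1 (by omega)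
    have hne2 : S2.Nonempty := Finset.card_pos.1 (by omega)
    obtain ⟨x0, hx0⟩ := hne0
    obtain ⟨x1, hx1⟩ := hne1
    obtain ⟨x2, hx2⟩ := hne2
    -- helper to finish given a median configuration
    have finish : ∀ (a b c : Fin 3) (hab : b ≠ a) (hcb : b ≠ c)
        (za zb zc : ℕ) (hzab : za ≤ zb) (hzbc : zb ≤ zc)
        (va vc : Vt h),
        (lo (Sum.inr (a, va)) ≤ za ∧ za ≤ hi (Sum.inr (a, va))) →
        (lo (Sum.inr (c, vc)) ≤ zc ∧ zc ≤ hi (Sum.inr (c, vc))) →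
        ∀ (Sb : Finset (Vt h)), Sb.card = h + 1 →
        (∀ v ∈ Sb, lo (Sum.inr (b, v)) ≤ zb ∧ zb ≤ hi (Sum.inr (b, v))) →
        ∃ (z : ℕ) (S : Finset (Vt (h+1))), S.card = (h+1) + 1 ∧
          ∀ v ∈ S, lo v ≤ z ∧ z ≤ hi v := by
      intro a b c hab hcb za zb zc hzab hzbc va vc hva hvc Sb hSbc hSb
      obtain ⟨w, hwb, hw⟩ := heavy_step h lo hi hadj a b c hab hcb za zb zc hzab hzbc
        va vc hva hvc
      let emb : Vt h ↪ Vt (h+1) := ⟨fun v => Sum.inr (b, v), by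
        intro u v huv
        exact (Prod.ext_iff.1 (Sum.inr_injective huv)).2⟩
      refine ⟨zb, insert (@id (Vt (h+1)) w) (Sb.map emb), ?_, ?_⟩
      · rw [Finset.card_insert_of_notMem, Finset.card_map, hSbc]
        rw [Finset.mem_map]
        rintro ⟨x, -, hx⟩
        exact hwb x hx.symm
      · intro v hv
        rcases Finset.mem_insert.1 hv with rfl | hv
        · exact hw
        · rw [Finset.mem_map] at hv
          obtain ⟨x, hx, rfl⟩ := hv
          exact hSb x hx
    rcases le_total z0 z1 with h01 | h10
    · rcases le_total z1 z2 with h12 | h21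
      · exact finish 0 1 2 (by decide) (by decide) z0 z1 z2 h01 h12 x0 x2
          (hS0 x0 hx0) (hS2 x2 hx2) S1 hS1c hS1
      · rcases le_total z0 z2 with h02 | h20
        · exact finish 0 2 1 (by decide) (by decide) z0 z2 z1 h02 h21 x0 x1
            (hS0 x0 hx0) (hS1 x1 hx1) S2 hS2c hS2
        · exact finish 2 0 1 (by decide) (by decide) z2 z0 z1 h20 h01 x2 x1
            (hS2 x2 hx2) (hS1 x1 hx1) S0 hS0c hS0
    · rcases le_total z0 z2 with h02 | h20
      · exact finish 1 0 2 (by decide) (by decide) z1 z0 z2 h10 h02 x1 x2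
          (hS1 x1 hx1) (hS2 x2 hx2) S0 hS0c hS0
      · rcases le_total z1 z2 with h12 | h21
        · exact finish 1 2 0 (by decide) (by decide) z1 z2 z0 h12 h20 x1 x0
            (hS1 x1 hx1) (hS0 x0 hx0) S2 hS2c hS2
        · exact finish 2 1 0 (by decide) (by decide) z2 z1 z0 h21 h10 x2 x0
            (hS2 x2 hx2) (hS0 x0 hx0) S1 hS1c hS1

/-! ### The lower-bound invariant -/

def good (B : CStruc sigTernary) : Prop :=
  ∀ u : Fin 3 → B.carrier, B.rel () u → (u 1 = u 0 ∨ u 1 = u 2) ∧ u 0 ≠ u 2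

structure CertProps (k m : ℕ) (B : CStruc sigTernary) (w : B.carrier)
    (lo hi : B.carrier → ℕ) : Prop where
  hhi : ∀ v, hi v ≤ m
  hlo : ∀ v, lo v ≤ m
  hcount : ∀ (j : ℕ) (S : Finset B.carrier), (∀ v ∈ S, lo v ≤ j ∧ j ≤ hi v) → S.card ≤ k
  hsing : ∀ v, (∀ u, B.col u = B.col v → u = v) → hi v = m
  hrel : ∀ u : Fin 3 → B.carrier, B.rel () u →
      (u 1 = u 0 → (lo (u 0) ≤ hi (u 0) ∧ lo (u 2) ≤ hi (u 0)) ∨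
        (lo (u 0) = lo (u 2) ∧ u 0 ≠ w ∧ u 2 ≠ w)) ∧
      (u 1 = u 2 → (lo (u 2) ≤ hi (u 2) ∧ lo (u 0) ≤ hi (u 2)) ∨
        (lo (u 2) = lo (u 0) ∧ u 2 ≠ w ∧ u 0 ≠ w))

def Cert (k : ℕ) (B : CStruc sigTernary) (w : B.carrier) : Prop :=
  ∃ m lo hi, CertProps k m B w lo hi

lemma colbound {σ : Signature} {k : ℕ} {B : CStruc σ} (h : UCW σ k B) :
    ∀ v, B.col v < k := by
  induction h with
  | empty A hA => exact fun v => (hA.false v).elim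
  | single hk A hsub hne hrel hcol => exact fun v => (hcol v) ▸ hk
  | union hA hB ihA ihB => rintro (a | b); exacts [ihA a, ihB b]
  | recolor f hf hU ih => exact fun v => hf _ (ih v)
  | introduce R c hc hU ih => exact fun v => ih v
  | iso e hU ih =>
    intro v
    have := ih (e.toEquiv.symm v)
    rwa [← e.col_eq, Equiv.apply_symm_apply] at this

lemma introduce_rel (A : CStruc sigTernary) (c : Fin 3 → ℕ) (u : Fin 3 → A.carrier) :
    (A.introduce () c).rel () u ↔ A.rel () u ∨ ∀ i, A.col (u i) = c i := by
  have hcast : ∀ (h : () = ()) (i : Fin 3),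
      (Fin.cast (congrArg sigTernary.ar h).symm i) = i := by
    intro h i; exact Fin.ext (by simp)
  constructor
  · rintro (h | ⟨h, hm⟩)
    · exact Or.inl h
    · right; intro i; have := hm i; rwa [hcast h i] at this
  · rintro (h | h)
    · exact Or.inl h
    · exact Or.inr ⟨rfl, fun i => by rw [hcast rfl i]; exact h i⟩

lemma good_of_iso {B C : CStruc sigTernary} (e : CIso B C) (h : good C) : good B := by
  intro u hu
  have := h (fun i => e.toEquiv (u i)) ((e.rel_iff () u).1 hu)
  refine ⟨?_, fun h02 => this.2 (congrArg e.toEquiv h02)⟩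
  rcases this.1 with h' | h'
  · exact Or.inl (e.toEquiv.injective h')
  · exact Or.inr (e.toEquiv.injective h')

lemma good_union_left {A B : CStruc sigTernary} (h : good (A.union B)) : good A := by
  intro u hu
  have := h (fun i => Sum.inl (u i)) (Or.inl ⟨u, fun i => rfl, hu⟩)
  refine ⟨?_, fun h02 => this.2 (congrArg Sum.inl h02)⟩
  rcases this.1 with h' | h'
  · exact Or.inl (Sum.inl_injective h')
  · exact Or.inr (Sum.inl_injective h')

lemma good_union_right {A B : CStruc sigTernary} (h : good (A.union B)) : good B := by
  intro u hu
  have := h (fun i => Sum.inr (u i)) (Or.inr ⟨u, fun i => rfl, hu⟩)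
  refine ⟨?_, fun h02 => this.2 (congrArg Sum.inr h02)⟩
  rcases this.1 with h' | h'
  · exact Or.inl (Sum.inr_injective h')
  · exact Or.inr (Sum.inr_injective h')

lemma cert_transport {k : ℕ} {B C : CStruc sigTernary} (e : CIso B C) {w : B.carrier}
    (h : Cert k B w) : Cert k C (e.toEquiv w) := by
  obtain ⟨m, lo, hi, P⟩ := h
  refine ⟨m, fun v => lo (e.toEquiv.symm v), fun v => hi (e.toEquiv.symm v), ?_⟩
  constructor
  · exact fun v => P.hhi _
  · exact fun v => P.hlo _
  · intro j S hS
    rw [← Finset.card_map e.toEquiv.symm.toEmbedding]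
    apply P.hcount j
    intro v hv
    rw [Finset.mem_map] at hv
    obtain ⟨x, hx, rfl⟩ := hv
    exact hS x hx
  · intro v hv
    apply P.hsing
    intro x hx
    have hx' : C.col (e.toEquiv x) = C.col v := by
      rw [e.col_eq, hx, ← e.col_eq, Equiv.apply_symm_apply]
    have := hv _ hx'
    rw [← this, Equiv.symm_apply_apply]
  · intro u hu
    have hu' : B.rel () (fun i => e.toEquiv.symm (u i)) := by
      rw [e.rel_iff]
      have : (fun i => e.toEquiv (e.toEquiv.symm (u i))) = u :=
        funext fun i => e.toEquiv.apply_symm_apply _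
      rwa [this]
    obtain ⟨H1, H2⟩ := P.hrel _ hu'
    constructor
    · intro h10
      rcases H1 (congrArg e.toEquiv.symm h10) with h' | ⟨ha, hb, hc⟩
      · exact Or.inl h'
      · refine Or.inr ⟨ha, ?_, ?_⟩
        · intro hww; exact hb (by rw [hww, Equiv.symm_apply_apply])
        · intro hww; exact hc (by rw [hww, Equiv.symm_apply_apply])
    · intro h12
      rcases H2 (congrArg e.toEquiv.symm h12) with h' | ⟨ha, hb, hc⟩
      · exact Or.inl h'
      · refine Or.inr ⟨ha, ?_, ?_⟩
        · intro hww; exact hb (by rw [hww, Equiv.symm_apply_apply])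
        · intro hww; exact hc (by rw [hww, Equiv.symm_apply_apply])

def unionComm {σ : Signature} (A B : CStruc σ) : CIso (B.union A) (A.union B) where
  toEquiv := Equiv.sumComm B.carrier A.carrier
  rel_iff := by
    intro R t
    constructor
    · rintro (⟨s, hs, hrel⟩ | ⟨s, hs, hrel⟩)
      · refine Or.inr ⟨s, fun i => ?_, hrel⟩
        show (Equiv.sumComm B.carrier A.carrier) (t i) = Sum.inr (s i)
        rw [hs i]; rfl
      · refine Or.inl ⟨s, fun i => ?_, hrel⟩
        show (Equiv.sumComm B.carrier A.carrier) (t i) = Sum.inl (s i)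
        rw [hs i]; rfl
    · rintro (⟨s, hs, hrel⟩ | ⟨s, hs, hrel⟩)
      · refine Or.inr ⟨s, fun i => ?_, hrel⟩
        have h2 : (Equiv.sumComm B.carrier A.carrier) (t i) = Sum.inl (s i) := hs i
        cases ht : t i with
        | inl x => rw [ht] at h2; exact absurd h2 (by simp)
        | inr y => rw [ht] at h2; simp at h2; rw [h2]
      · refine Or.inl ⟨s, fun i => ?_, hrel⟩
        have h2 : (Equiv.sumComm B.carrier A.carrier) (t i) = Sum.inr (s i) := hs i
        cases ht : t i with
        | inl x => rw [ht] at h2; simp at h2; rw [h2]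
        | inr y => rw [ht] at h2; exact absurd h2 (by simp)
  col_eq := by rintro (b | a) <;> rfl

lemma cert_union_left {k : ℕ} {A B : CStruc sigTernary} {wa : A.carrier}
    (hA : Cert k A wa) (hcolA : ∀ v, A.col v < k) (hcolB : ∀ v, B.col v < k) :
    Cert k (A.union B) (Sum.inl wa) := by
  classical
  obtain ⟨m, lo, hi, P⟩ := hA
  set p := m + 1 with hp
  let U := A.union B
  let Sing : U.carrier → Prop := fun v => ∀ u, U.col u = U.col v → u = v
  let lo' : U.carrier → ℕ := Sum.elim lo (fun _ => p)
  let hi' : U.carrier → ℕ := fun v => if Sing v then p else Sum.elim hi (fun _ => 0) v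
  have hcolU : ∀ v : U.carrier, U.col v < k := by
    rintro (a | b); exacts [hcolA a, hcolB b]
  have hSingA : ∀ a : A.carrier, Sing (Sum.inl a) →
      (∀ u, A.col u = A.col a → u = a) := by
    intro a hs u hu
    have := hs (Sum.inl u) hu
    exact Sum.inl_injective this
  have hi'_ge : ∀ a : A.carrier, hi a ≤ hi' (Sum.inl a) := by
    intro a
    by_cases hs : Sing (Sum.inl a)
    · rw [show hi' (Sum.inl a) = p from if_pos hs]
      exact le_trans (P.hhi a) (Nat.le_succ m)
    · rw [show hi' (Sum.inl a) = hi a from if_neg hs]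
  have hi'_caseA : ∀ a : A.carrier, ∀ j, j ≤ m → j ≤ hi' (Sum.inl a) → j ≤ hi a := by
    intro a j hjm hj
    by_cases hs : Sing (Sum.inl a)
    · rw [P.hsing a (hSingA a hs)]; exact hjm
    · rwa [show hi' (Sum.inl a) = hi a from if_neg hs] at hj
  refine ⟨p, lo', hi', ?_, ?_, ?_, ?_, ?_⟩
  · -- hhi
    intro v
    by_cases hs : Sing v
    · rw [show hi' v = p from if_pos hs]
    · rw [show hi' v = Sum.elim hi (fun _ => 0) v from if_neg hs]
      rcases v with a | b
      · exact le_trans (P.hhi a) (Nat.le_succ m)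
      · exact Nat.zero_le p
  · -- hlo
    rintro (a | b)
    · exact le_trans (P.hlo a) (Nat.le_succ m)
    · exact le_refl p
  · -- hcount
    intro j S hS
    rcases le_or_gt j m with hj | hj
    · -- all members are inl with old cover
      let g : U.carrier → A.carrier := Sum.elim id (fun _ => wa)
      have hmem : ∀ v ∈ S, ∃ a, v = Sum.inl a ∧ lo a ≤ j ∧ j ≤ hi a := by
        intro v hv
        obtain ⟨h1, h2⟩ := hS v hv
        rcases v with a | b
        · exact ⟨a, rfl, h1, hi'_caseA a j hj h2⟩
        · exfalso
          have : p ≤ j := h1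
          omega
      have hinj : Set.InjOn g ↑S := by
        intro v hv v' hv' hg
        obtain ⟨a, rfl, -, -⟩ := hmem v hv
        obtain ⟨a', rfl, -, -⟩ := hmem v' hv'
        exact congrArg Sum.inl (by simpa [g] using hg)
      rw [← Finset.card_image_of_injOn hinj]
      apply P.hcount j
      intro a ha
      rw [Finset.mem_image] at ha
      obtain ⟨v, hv, rfl⟩ := ha
      obtain ⟨a', heq, h1, h2⟩ := hmem v hv
      subst heq
      exact ⟨h1, h2⟩
    · -- j > m : only union-singletons can cover
      have hSing : ∀ v ∈ S, Sing v := by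
        intro v hv
        obtain ⟨h1, h2⟩ := hS v hv
        by_contra hs
        rw [show hi' v = Sum.elim hi (fun _ => 0) v from if_neg hs] at h2
        rcases v with a | b
        · have := P.hhi a; have : j ≤ hi a := h2; omega
        · have : j ≤ 0 := h2
          have : p ≤ j := h1
          omega
      have hinj : Set.InjOn U.col ↑S := by
        intro v hv v' hv' hg
        exact (hSing v' hv' v hg).symm ▸ rfl
      rw [← Finset.card_image_of_injOn hinj]
      calc (S.image U.col).card ≤ (Finset.range k).card := by
            apply Finset.card_le_card
            intro x hx
            rw [Finset.mem_image] at hx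
            obtain ⟨v, -, rfl⟩ := hx
            exact Finset.mem_range.2 (hcolU v)
        _ = k := Finset.card_range k
  · -- hsing
    intro v hv
    exact if_pos hv
  · -- hrel
    rintro u (⟨s, hs, hsrel⟩ | ⟨s, hs, hsrel⟩)
    · -- A-side tuple
      obtain ⟨H1, H2⟩ := P.hrel s hsrel
      have e0 := hs 0; have e1 := hs 1; have e2 := hs 2
      constructor
      · intro h10
        have hs10 : s 1 = s 0 := Sum.inl_injective (e1 ▸ e0 ▸ h10)
        rcases H1 hs10 with ⟨ha, hb⟩ | ⟨ha, hb, hc⟩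
        · left
          rw [e0, e2]
          exact ⟨le_trans ha (hi'_ge (s 0)), le_trans hb (hi'_ge (s 0))⟩
        · right
          rw [e0, e2]
          exact ⟨ha, fun hq => hb (Sum.inl_injective hq), fun hq => hc (Sum.inl_injective hq)⟩
      · intro h12
        have hs12 : s 1 = s 2 := Sum.inl_injective (e1 ▸ e2 ▸ h12)
        rcases H2 hs12 with ⟨ha, hb⟩ | ⟨ha, hb, hc⟩
        · left
          rw [e0, e2]
          exact ⟨le_trans ha (hi'_ge (s 2)), le_trans hb (hi'_ge (s 2))⟩
        · right
          rw [e0, e2]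
          exact ⟨ha, fun hq => hb (Sum.inl_injective hq), fun hq => hc (Sum.inl_injective hq)⟩
    · -- B-side tuple : always the "off-chain" case
      have e0 := hs 0; have e2 := hs 2
      constructor
      · intro _
        right
        rw [e0, e2]
        exact ⟨rfl, fun hq => by simp at hq, fun hq => by simp at hq⟩
      · intro _
        right
        rw [e0, e2]
        exact ⟨rfl, fun hq => by simp at hq, fun hq => by simp at hq⟩

lemma main_inv {k : ℕ} {B : CStruc sigTernary} (h : UCW sigTernary k B) :
    good B → ∀ w : B.carrier, Cert k B w := by
  induction h with
  | empty A hA => exact fun _ w => (hA.false w).elim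
  | single hk A hsub hne hrelA hcol =>
    intro _ w
    refine ⟨0, fun _ => 0, fun _ => 0, ?_, ?_, ?_, ?_, ?_⟩
    · exact fun v => le_refl 0
    · exact fun v => le_refl 0
    · intro j S hS
      have : S.card ≤ 1 := Finset.card_le_one.2 (fun a _ b _ => hsub a b)
      omega
    · exact fun v _ => rfl
    · exact fun u hu => absurd hu (hrelA () u)
  | @union A B hUA hUB ihA ihB =>
    intro hgood w
    rcases w with wa | wb
    · exact cert_union_left (ihA (good_union_left hgood) wa) (colbound hUA) (colbound hUB)
    · have h1 : Cert k (B.union A) (Sum.inl wb) :=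
        cert_union_left (ihB (good_union_right hgood) wb) (colbound hUB) (colbound hUA)
      have h2 := cert_transport (unionComm A B) h1
      exact h2
  | @recolor A f hf hU ih =>
    intro hgood w
    classical
    have hgoodA : good A := fun u hu => hgood u hu
    obtain ⟨m, lo, hi, P⟩ := ih hgoodA w
    let C := A.recolor f
    let Sing : A.carrier → Prop := fun v => ∀ u, C.col u = C.col v → u = v
    let hi' : A.carrier → ℕ := fun v => if Sing v then m + 1 else hi v
    have hSingOld : ∀ v, Sing v → (∀ u, A.col u = A.col v → u = v) := by
      intro v hs u hu
      exact hs u (show f (A.col u) = f (A.col v) from congrArg f hu)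
    have hi'_ge : ∀ v, hi v ≤ hi' v := by
      intro v
      by_cases hs : Sing v
      · rw [show hi' v = m + 1 from if_pos hs]
        exact le_trans (P.hhi v) (Nat.le_succ m)
      · rw [show hi' v = hi v from if_neg hs]
    refine ⟨m + 1, lo, hi', ?_, ?_, ?_, ?_, ?_⟩
    · intro v
      by_cases hs : Sing v
      · rw [show hi' v = m + 1 from if_pos hs]
      · rw [show hi' v = hi v from if_neg hs]
        exact le_trans (P.hhi v) (Nat.le_succ m)
    · exact fun v => le_trans (P.hlo v) (Nat.le_succ m)
    · intro j S hS
      rcases le_or_gt j m with hj | hj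
      · apply P.hcount j
        intro v hv
        obtain ⟨h1, h2⟩ := hS v hv
        refine ⟨h1, ?_⟩
        by_cases hs : Sing v
        · rw [P.hsing v (hSingOld v hs)]; exact hj
        · rwa [show hi' v = hi v from if_neg hs] at h2
      · have hSing : ∀ v ∈ S, Sing v := by
          intro v hv
          obtain ⟨h1, h2⟩ := hS v hv
          by_contra hs
          rw [show hi' v = hi v from if_neg hs] at h2
          have := P.hhi v
          omega
        have hinj : Set.InjOn C.col ↑S := by
          intro v hv v' hv' hg
          exact (hSing v' hv' v hg).symm ▸ rfl
        rw [← Finset.card_image_of_injOn hinj]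
        calc (S.image C.col).card ≤ (Finset.range k).card := by
              apply Finset.card_le_card
              intro x hx
              rw [Finset.mem_image] at hx
              obtain ⟨v, -, rfl⟩ := hx
              exact Finset.mem_range.2 (hf _ (colbound hU v))
          _ = k := Finset.card_range k
    · intro v hv
      exact if_pos hv
    · intro u hu
      obtain ⟨H1, H2⟩ := P.hrel u hu
      constructor
      · intro h10
        rcases H1 h10 with ⟨ha, hb⟩ | hoff
        · exact Or.inl ⟨le_trans ha (hi'_ge _), le_trans hb (hi'_ge _)⟩
        · exact Or.inr hoff
      · intro h12
        rcases H2 h12 with ⟨ha, hb⟩ | hoff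
        · exact Or.inl ⟨le_trans ha (hi'_ge _), le_trans hb (hi'_ge _)⟩
        · exact Or.inr hoff
  | @introduce A R c hc hU ih =>
    intro hgood w
    cases R
    have hgoodA : good A := by
      intro u hu
      exact hgood u ((introduce_rel A c u).2 (Or.inl hu))
    obtain ⟨m, lo, hi, P⟩ := ih hgoodA w
    refine ⟨m, lo, hi, P.hhi, P.hlo, P.hcount, P.hsing, ?_⟩
    intro u hu
    rcases (introduce_rel A c u).1 hu with hold | hmat
    · exact P.hrel u hold
    · have hne02 : u 0 ≠ u 2 := (hgood u hu).2
      constructor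
      · intro h10
        left
        have hsing0 : ∀ x, A.col x = A.col (u 0) → x = u 0 := by
          intro x hx
          have hm' : ∀ i, A.col ((![x, u 0, u 2] : Fin 3 → A.carrier) i) = c i := by
            intro i
            fin_cases i
            · show A.col x = c 0
              rw [hx, hmat 0]
            · show A.col (u 0) = c 1
              rw [← h10, hmat 1]
            · show A.col (u 2) = c 2
              rw [hmat 2]
          have hrel' : (A.introduce () c).rel () ![x, u 0, u 2] :=
            (introduce_rel A c _).2 (Or.inr hm')
          have hshape := hgood _ hrel'
          have h1' : (![x, u 0, u 2] : Fin 3 → A.carrier) 1 = u 0 := rfl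
          have h0' : (![x, u 0, u 2] : Fin 3 → A.carrier) 0 = x := rfl
          have h2' : (![x, u 0, u 2] : Fin 3 → A.carrier) 2 = u 2 := rfl
          rcases hshape.1 with h' | h'
          · exact (h1'.symm.trans (h'.trans h0')).symm
          · exact absurd (h1'.symm.trans (h'.trans h2')) hne02
        have h0m : hi (u 0) = m := P.hsing (u 0) hsing0
        rw [h0m]
        exact ⟨P.hlo _, P.hlo _⟩
      · intro h12
        left
        have hsing2 : ∀ x, A.col x = A.col (u 2) → x = u 2 := by
          intro x hx
          have hm' : ∀ i, A.col ((![u 0, u 2, x] : Fin 3 → A.carrier) i) = c i := by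
            intro i
            fin_cases i
            · show A.col (u 0) = c 0
              rw [hmat 0]
            · show A.col (u 2) = c 1
              rw [← h12, hmat 1]
            · show A.col x = c 2
              rw [hx, hmat 2]
          have hrel' : (A.introduce () c).rel () ![u 0, u 2, x] :=
            (introduce_rel A c _).2 (Or.inr hm')
          have hshape := hgood _ hrel'
          rcases hshape.1 with h' | h'
          · exact absurd (show u 2 = u 0 from h') (Ne.symm hne02)
          · exact (show u 2 = x from h').symm
        have h2m : hi (u 2) = m := P.hsing (u 2) hsing2
        rw [h2m]
        exact ⟨P.hlo _, P.hlo _⟩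
  | @iso A B e hU ih =>
    intro hgood w
    have hgoodA : good A := good_of_iso e hgood
    have := cert_transport e (ih hgoodA (e.toEquiv.symm w))
    rwa [Equiv.apply_symm_apply] at this

/-! ### The concrete structure and its ucw lower bound -/

def Agr (h : ℕ) : CStruc sigGraph where
  carrier := Vt h
  rel := fun _ u => (Gt h).Adj (u 0) (u 1)
  col := fun _ => 0

def Apr (h : ℕ) : CStruc sigTernary := prime (Agr h)

lemma Apr_carrier (h : ℕ) : (Apr h).carrier = (Vt h ⊕ Unit) := rfl

lemma good_Apr (h : ℕ) : good (Apr h) := by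
  intro u hu
  exact ⟨hu.2.1, hu.1⟩

lemma Apr_rel_t (h : ℕ) (v : Vt h) :
    (Apr h).rel () ![Sum.inr (), Sum.inl v, Sum.inl v] := by
  refine ⟨by simp, Or.inr rfl, Or.inr rfl⟩

lemma Apr_rel_adj (h : ℕ) {a b : Vt h} (hab : (Gt h).Adj a b) :
    (Apr h).rel () ![Sum.inl a, Sum.inl a, Sum.inl b] := by
  refine ⟨by simp [hab.ne]; exact fun he => hab.ne (Sum.inl_injective he), Or.inl rfl, Or.inl ⟨a, b, rfl, rfl, hab⟩⟩

lemma ucw_lower (n k : ℕ) (hU : UCW sigTernary k (Apr (n+1))) : n + 2 ≤ k := by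
  obtain ⟨m, lo, hi, P⟩ := main_inv hU (good_Apr (n+1)) (Sum.inr ())
  set lo1 : Vt (n+1) → ℕ := fun v => lo (Sum.inl v) with hlo1
  set hi1 : Vt (n+1) → ℕ := fun v => hi (Sum.inl v) with hhi1
  have hne : ∀ v, lo1 v ≤ hi1 v := by
    intro v
    obtain ⟨-, H2⟩ := P.hrel _ (Apr_rel_t (n+1) v)
    rcases H2 rfl with ⟨h1, -⟩ | ⟨-, -, hc⟩
    · exact h1
    · exact absurd rfl hc
  have hadj : ∀ a b, (Gt (n+1)).Adj a b → lo1 a ≤ hi1 b ∧ lo1 b ≤ hi1 a := by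
    have key : ∀ a b, (Gt (n+1)).Adj a b → lo1 b ≤ hi1 a := by
      intro a b hab
      obtain ⟨H1, -⟩ := P.hrel _ (Apr_rel_adj (n+1) hab)
      rcases H1 rfl with ⟨-, h2⟩ | ⟨heq, -, -⟩
      · exact h2
      · have : lo1 a = lo1 b := heq
        rw [← this]
        exact hne a
    exact fun a b hab => ⟨key b a hab.symm, key a b hab⟩
  obtain ⟨z, S, hcard, hcov⟩ := heavy (n+1) lo1 hi1 hadj hne
  have := P.hcount z (S.map ⟨Sum.inl, Sum.inl_injective⟩)
    (by
      intro v hv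
      replace hv := Finset.mem_map.1 hv
      obtain ⟨x, hx, rfl⟩ := hv
      exact hcov x hx)
  replace this := (Finset.card_map _).symm.trans_le this
  replace this := hcard.symm.trans_le this
  omega

/-! ### Upper bound: every finite structure has finite unary clique-width -/

lemma build_base (K : ℕ) (hK : 0 < K) :
    ∀ (m : ℕ) (g : Fin m → ℕ), (∀ i, g i < K) →
    UCW sigTernary K ⟨Fin m, fun _ _ => False, fun i => g i⟩ := by
  intro m
  induction m with
  | zero =>
    intro g hg
    exact UCW.empty _ (by simp; infer_instance)
  | succ m ih =>
    intro g hg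
    have h1 := ih (fun i => g i.castSucc) (fun i => hg _)
    have hs : UCW sigTernary K ⟨PUnit, fun _ _ => False, fun _ => 0⟩ :=
      UCW.single hK _ (fun a b => rfl) ⟨PUnit.unit⟩ (fun R t h => h) (fun a => rfl)
    have hs' := UCW.recolor (fun _ => g (Fin.last m)) (fun i _ => hg _) hs
    have hu := UCW.union h1 hs'
    refine UCW.iso ?_ hu
    refine ⟨⟨Sum.elim Fin.castSucc (fun _ => Fin.last m),
      fun i => if h : i = Fin.last m then Sum.inr PUnit.unit else Sum.inl (i.castPred h),
      ?_, ?_⟩, ?_, ?_⟩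
    · rintro (j | u)
      · simp [(Fin.castSucc_lt_last j).ne]; rfl
      · simp
        exact congrArg Sum.inr (Subsingleton.elim (α := PUnit) _ _)
    · intro i
      by_cases h : i = Fin.last m
      · simp [h]; rfl
      · simp [h]
    · intro R t
      constructor
      · rintro (⟨s, -, h⟩ | ⟨s, -, h⟩) <;> exact h.elim
      · exact fun h => h.elim
    · rintro (j | u) <;> rfl

lemma build_rel (K : ℕ) (hK : 0 < K) (α : Type) (e : α ≃ Fin K) :
    ∀ (l : List (Fin 3 → α)),
    UCW sigTernary K ⟨α, fun _ u => u ∈ l, fun a => (e a : ℕ)⟩ := by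
  intro l
  induction l with
  | nil =>
    have h0 := build_base K hK K (fun i => (i : ℕ)) (fun i => i.isLt)
    refine UCW.iso ⟨e.symm, ?_, ?_⟩ h0
    · intro R t
      cases R
      simp
    · intro a
      show (e (e.symm a) : ℕ) = (a : ℕ)
      rw [Equiv.apply_symm_apply]
  | cons u l ih =>
    have hI := UCW.introduce
      (A := (⟨α, fun _ u => u ∈ l, fun a => (e a : ℕ)⟩ : CStruc sigTernary))
      () (fun i => (e (u i) : ℕ)) (fun i => (e (u i)).isLt) ih
    refine UCW.iso ⟨Equiv.refl α, ?_, ?_⟩ hI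
    · intro R t
      cases R
      refine (introduce_rel ⟨α, fun _ u => u ∈ l, fun a => (e a : ℕ)⟩ (fun i => (e (u i) : ℕ)) t).trans ?_
      have ht : (fun i => (Equiv.refl α) (t i)) = t := rfl
      show (t ∈ l ∨ _) ↔ (fun i => (Equiv.refl α) (t i)) ∈ u :: l
      rw [ht]; refine Iff.trans ?_ List.mem_cons.symm
      constructor
      · rintro (h | h)
        · exact Or.inr h
        · refine Or.inl ?_
          funext i
          have := h i
          exact e.injective (Fin.val_injective this)
      · rintro (h | h)
        · exact Or.inr (fun i => by rw [h])
        · exact Or.inl h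
    · exact fun a => rfl

lemma ucw_upper (h : ℕ) :
    UCW sigTernary (Fintype.card (Vt h ⊕ Unit)) (Apr h) := by
  classical
  set α := Vt h ⊕ Unit
  set K := Fintype.card α with hKdef
  have hK : 0 < K := Fintype.card_pos
  set e := Fintype.equivFin α with he
  let l : List (Fin 3 → α) :=
    ((Finset.univ : Finset (Fin 3 → α)).filter (fun u => (Apr h).rel () u)).toList
  have hl : ∀ u : Fin 3 → α, u ∈ l ↔ (Apr h).rel () u := by
    intro u
    simp only [l, Finset.mem_toList, Finset.mem_filter, Finset.mem_univ, true_and]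
    exact Finset.mem_toList.trans ((Finset.mem_filter (p := fun u : Fin 3 → α => (Apr h).rel () u)).trans
      (and_iff_right (Finset.mem_univ _)))
  have h1 := build_rel K hK α e l
  have h2 := UCW.recolor (fun _ => 0) (fun i _ => hK) h1
  refine UCW.iso ⟨Equiv.refl α, ?_, ?_⟩ h2
  · intro R t
    cases R
    show t ∈ l ↔ _
    refine (hl t).trans ?_
    exact Iff.rfl
  · exact fun a => rfl

/-! ### Treewidth of the Gaifman graph: upper bound -/

lemma gaif_adj (h : ℕ) (x y : (Apr h).carrier) :
    (Apr h).gaifman.Adj x y ↔ x ≠ y ∧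
      ((∃ a b, x = Sum.inl a ∧ y = Sum.inl b ∧ (Gt h).Adj a b) ∨
        x = Sum.inr () ∨ y = Sum.inr ()) := by
  constructor
  · rintro ⟨hne, R, u, hu, ⟨i, hi⟩, ⟨j, hj⟩⟩
    refine ⟨hne, ?_⟩
    obtain ⟨h02, h1, hE⟩ := hu
    have hrange : ∀ i : Fin 3, u i = u 0 ∨ u i = u 2 := by
      intro i
      fin_cases i
      · exact Or.inl rfl
      · exact h1
      · exact Or.inr rfl
    rcases hE with ⟨a, b, ha, hb, hab⟩ | ht
    · have hadj : (Gt h).Adj a b := hab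
      have hxy : (x = u 0 ∧ y = u 2) ∨ (x = u 2 ∧ y = u 0) := by
        rcases hrange i with h' | h' <;> rcases hrange j with h'' | h''
        · exact absurd (show x = y by rw [← hi, ← hj, h', h'']) hne
        · exact Or.inl ⟨by rw [← hi, h'], by rw [← hj, h'']⟩
        · exact Or.inr ⟨by rw [← hi, h'], by rw [← hj, h'']⟩
        · exact absurd (show x = y by rw [← hi, ← hj, h', h'']) hne
      rcases hxy with ⟨hx, hy⟩ | ⟨hx, hy⟩
      · exact Or.inl ⟨a, b, hx.trans ha, hy.trans hb, hadj⟩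
      · exact Or.inl ⟨b, a, hx.trans hb, hy.trans ha, hadj.symm⟩
    · rcases hrange i with h' | h'
      · exact Or.inr (Or.inl (by rw [← hi, h', ht]))
      · rcases hrange j with h'' | h''
        · exact Or.inr (Or.inr (by rw [← hj, h'', ht]))
        · exact absurd (show x = y by rw [← hi, ← hj, h', h'']) hne
  · rintro ⟨hne, ⟨a, b, rfl, rfl, hab⟩ | ht | ht⟩
    · exact ⟨hne, (), ![Sum.inl a, Sum.inl a, Sum.inl b], Apr_rel_adj h hab,
        ⟨0, rfl⟩, ⟨2, rfl⟩⟩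
    · subst ht
      have hy : ∃ v, y = Sum.inl v := by
        rcases y with v | u
        · exact ⟨v, rfl⟩
        · cases u; exact absurd rfl hne
      obtain ⟨v, rfl⟩ := hy
      exact ⟨hne, (), ![Sum.inr (), Sum.inl v, Sum.inl v], Apr_rel_t h v,
        ⟨0, rfl⟩, ⟨1, rfl⟩⟩
    · subst ht
      have hx : ∃ v, x = Sum.inl v := by
        rcases x with v | u
        · exact ⟨v, rfl⟩
        · cases u; exact absurd rfl hne
      obtain ⟨v, rfl⟩ := hx
      exact ⟨hne, (), ![Sum.inr (), Sum.inl v, Sum.inl v], Apr_rel_t h v,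
        ⟨1, rfl⟩, ⟨0, rfl⟩⟩

lemma reach_induce {V : Type} {G : SimpleGraph V} {S : Set V} :
    ∀ {a b : V} (W : G.Walk a b), (∀ x ∈ W.support, x ∈ S) →
      ∀ (ha : a ∈ S) (hb : b ∈ S), (G.induce S).Reachable ⟨a, ha⟩ ⟨b, hb⟩ := by
  intro a b W
  induction W with
  | nil => exact fun _ ha hb => SimpleGraph.Reachable.refl _
  | @cons u x v ha' W ih =>
    intro hW haS hbS
    have hx : x ∈ S := hW x (by simp [SimpleGraph.Walk.support_cons])
    have h1 : (G.induce S).Adj ⟨u, haS⟩ ⟨x, hx⟩ := ha'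
    exact (h1.reachable).trans
      (ih (fun y hy => hW y (by simp [SimpleGraph.Walk.support_cons, hy])) hx hbS)

lemma induce_connected_of_center {V : Type} (G : SimpleGraph V) (S : Set V) (c : V)
    (hc : c ∈ S)
    (hwalk : ∀ v ∈ S, ∃ (W : G.Walk v c), ∀ x ∈ W.support, x ∈ S) :
    (G.induce S).Connected := by
  rw [SimpleGraph.connected_iff_exists_forall_reachable]
  refine ⟨⟨c, hc⟩, ?_⟩
  rintro ⟨v, hv⟩
  obtain ⟨W, hW⟩ := hwalk v hv
  exact (reach_induce W hW hv hc).symm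

/-! ### twLe 2 for the Gaifman graph -/

lemma twle2 (h : ℕ) : twLe (Apr h).gaifman 2 := by
  classical
  refine ⟨Vt h, Gt h, gt_isTree h, ?_⟩
  refine ⟨⟨fun i => {Sum.inr (), Sum.inl i, Sum.inl (part h i)}, ?_, ?_, ?_⟩, ?_⟩
  · rintro (a | u)
    · exact ⟨a, Or.inr (Or.inl rfl)⟩
    · cases u
      exact ⟨roott h, Or.inl rfl⟩
  · intro x y hxy
    rw [gaif_adj] at hxy
    obtain ⟨hne, hcase⟩ := hxy
    rcases hcase with ⟨a, b, rfl, rfl, hab⟩ | rfl | rfl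
    · rcases hab with ⟨ha0, hb⟩ | ⟨hb0, ha⟩
      · exact ⟨a, Or.inr (Or.inl rfl), Or.inr (Or.inr (by rw [hb]; rfl))⟩
      · exact ⟨b, Or.inr (Or.inr (by rw [ha]; rfl)), Or.inr (Or.inl rfl)⟩
    · have hy : ∃ v, y = Sum.inl v := by
        rcases y with v | u
        · exact ⟨v, rfl⟩
        · cases u; exact absurd rfl hne
      obtain ⟨v, rfl⟩ := hy
      exact ⟨v, Or.inl rfl, Or.inr (Or.inl rfl)⟩
    · have hx : ∃ v, x = Sum.inl v := by
        rcases x with v | u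
        · exact ⟨v, rfl⟩
        · cases u; exact absurd rfl hne
      obtain ⟨v, rfl⟩ := hx
      exact ⟨v, Or.inr (Or.inl rfl), Or.inl rfl⟩
  · rintro (a | u)
    · apply induce_connected_of_center (Gt h) _ a
      · exact Or.inr (Or.inl rfl)
      · intro i hi
        have hi' : i = a ∨ part h i = a := by
          rcases hi with h' | h' | h'
          · exact absurd h' (by simp)
          · exact Or.inl (by injection h' with hh; exact hh.symm)
          · exact Or.inr (by injection h' with hh; exact hh.symm)
        by_cases hia : i = a
        · subst hia
          refine ⟨SimpleGraph.Walk.nil, ?_⟩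
          intro x hx
          rw [SimpleGraph.Walk.support_nil, List.mem_singleton] at hx
          subst hx
          exact hi
        · have hpi : part h i = a := hi'.resolve_left hia
          have hiroot : i ≠ roott h := by
            intro hr
            rw [hr, part_root] at hpi
            exact hia (hr.trans hpi)
          have hadj : (Gt h).Adj i a := Or.inl ⟨hiroot, hpi.symm⟩
          refine ⟨SimpleGraph.Walk.cons hadj SimpleGraph.Walk.nil, ?_⟩
          intro x hx
          change x ∈ ([i, a] : List (Vt h)) at hx
          rcases List.mem_cons.1 hx with rfl | hx2
          · exact hi
          · replace hx2 := List.mem_singleton.1 hx2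
            subst hx2
            exact Or.inr (Or.inl rfl)
    · cases u
      apply induce_connected_of_center (Gt h) _ (roott h)
      · exact Or.inl rfl
      · intro v _
        obtain ⟨W⟩ := gt_reachable_root h v
        exact ⟨W, fun x _ => Or.inl rfl⟩
  · intro i
    calc ({Sum.inr (), Sum.inl i, Sum.inl (part h i)} : Set ((Apr h).carrier)).ncard
        ≤ ({Sum.inl i, Sum.inl (part h i)} : Set ((Apr h).carrier)).ncard + 1 :=
          Set.ncard_insert_le _ _
      _ ≤ (({Sum.inl (part h i)} : Set ((Apr h).carrier)).ncard + 1) + 1 := by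
          have := Set.ncard_insert_le (Sum.inl i : (Apr h).carrier)
            ({Sum.inl (part h i)} : Set ((Apr h).carrier))
          exact Nat.add_le_add_right this 1
      _ ≤ 2 + 1 := Nat.le_of_eq (congrArg (· + 1 + 1) (Set.ncard_singleton _))

/-! ### Treewidth lower bound -/

lemma path_in_connected {ι : Type} {T : SimpleGraph ι} {S : Set ι}
    (hconn : (T.induce S).Connected) {a b : ι} (ha : a ∈ S) (hb : b ∈ S) :
    ∃ (W : T.Walk a b), W.IsPath ∧ ∀ x ∈ W.support, x ∈ S := by
  classical
  obtain ⟨W0⟩ := hconn ⟨a, ha⟩ ⟨b, hb⟩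
  let W1 : T.Walk a b := W0.map (SimpleGraph.Embedding.induce S).toHom
  have hsup : ∀ x ∈ W1.support, x ∈ S := by
    intro x hx
    rw [show W1.support = W0.support.map (SimpleGraph.Embedding.induce S).toHom from
      SimpleGraph.Walk.support_map _ _, List.mem_map] at hx
    obtain ⟨⟨y, hy⟩, -, rfl⟩ := hx
    exact hy
  exact ⟨W1.bypass, SimpleGraph.Walk.bypass_isPath W1,
    fun x hx => hsup x (SimpleGraph.Walk.support_bypass_subset W1 hx)⟩

lemma crossing {ι : Type} {T : SimpleGraph ι} :
    ∀ {a b : ι} (W : T.Walk a b) (p q : ι → Prop),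
    p a → q b → (∀ x ∈ W.support, p x ∨ q x) → (∀ x ∈ W.support, ¬(p x ∧ q x)) →
    ∃ u v, T.Adj u v ∧ u ∈ W.support ∧ v ∈ W.support ∧ p u ∧ q v := by
  intro a b W
  induction W with
  | nil =>
    intro p q hp hq _ hno
    exact absurd ⟨hp, hq⟩ (hno _ (SimpleGraph.Walk.start_mem_support _))
  | @cons a x b ha W ih =>
    intro p q hp hq hall hno
    have hx : x ∈ (SimpleGraph.Walk.cons ha W).support := by
      simp [SimpleGraph.Walk.support_cons]
    rcases hall x hx with hpx | hqx
    · obtain ⟨u, v, huv, hu, hv, hpu, hqv⟩ := ih p q hpx hq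
        (fun y hy => hall y (by simp [SimpleGraph.Walk.support_cons, hy]))
        (fun y hy => hno y (by simp [SimpleGraph.Walk.support_cons, hy]))
      exact ⟨u, v, huv, by simp [SimpleGraph.Walk.support_cons, hu],
        by simp [SimpleGraph.Walk.support_cons, hv], hpu, hqv⟩
    · exact ⟨a, x, ha, SimpleGraph.Walk.start_mem_support _, hx, hp, hqx⟩

lemma tree_edge_path {ι : Type} {T : SimpleGraph ι} (hT : T.IsTree) {u v c : ι}
    (huv : T.Adj u v) (Wv : T.Walk v c) (hWv : Wv.IsPath) (Wu : T.Walk u c)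
    (hWu : Wu.IsPath) : u ∈ Wv.support ∨ v ∈ Wu.support := by
  by_cases hu : u ∈ Wv.support
  · exact Or.inl hu
  · right
    have hpath : (SimpleGraph.Walk.cons huv Wv).IsPath := hWv.cons hu
    have hequ : (⟨Wu, hWu⟩ : T.Path u c) = ⟨SimpleGraph.Walk.cons huv Wv, hpath⟩ :=
      hT.IsAcyclic.path_unique _ _
    have h2 : Wu = SimpleGraph.Walk.cons huv Wv := congrArg Subtype.val hequ
    rw [h2, SimpleGraph.Walk.support_cons]
    exact List.mem_cons.2 (Or.inr (SimpleGraph.Walk.start_mem_support _))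

lemma no_twle1 (n : ℕ) : ¬ twLe (Apr (n+1)).gaifman 1 := by
  classical
  rintro ⟨ι, T, hT, D, hbags⟩
  set xv : (Apr (n+1)).carrier := Sum.inr () with hxv
  set yv : (Apr (n+1)).carrier := Sum.inl (roott (n+1)) with hyv
  set zv : (Apr (n+1)).carrier := Sum.inl (Sum.inr ((0 : Fin 3), roott n)) with hzv
  have hyz : (Gt (n+1)).Adj (roott (n+1)) (Sum.inr ((0 : Fin 3), roott n)) := by
    right
    constructor
    · intro hh; cases hh
    · show roott (n+1) = part (n+1) _
      simp [part, roott]; rfl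
  have hxy_ne : xv ≠ yv := by rw [hxv, hyv]; intro hcon; injection hcon
  have hxz_ne : xv ≠ zv := by rw [hxv, hzv]; intro hcon; injection hcon
  have hyz_ne : yv ≠ zv := by
    rw [hyv, hzv]
    intro hcon
    injection hcon with h2
    rw [show roott (n+1) = Sum.inl () from rfl] at h2
    injection h2
  have hExy : (Apr (n+1)).gaifman.Adj xv yv :=
    (gaif_adj (n+1) xv yv).2 ⟨hxy_ne, Or.inr (Or.inl rfl)⟩
  have hExz : (Apr (n+1)).gaifman.Adj xv zv :=
    (gaif_adj (n+1) xv zv).2 ⟨hxz_ne, Or.inr (Or.inl rfl)⟩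
  have hEyz : (Apr (n+1)).gaifman.Adj yv zv :=
    (gaif_adj (n+1) yv zv).2 ⟨hyz_ne, Or.inl ⟨_, _, rfl, rfl, hyz⟩⟩
  have hnotriple : ∀ i, ¬(xv ∈ D.bag i ∧ yv ∈ D.bag i ∧ zv ∈ D.bag i) := by
    rintro i ⟨h1, h2, h3⟩
    have hsub : ({xv, yv, zv} : Set ((Apr (n+1)).carrier)) ⊆ D.bag i := by
      rintro w (rfl | rfl | rfl) <;> assumption
    have hfin : Finite ((Apr (n+1)).carrier) := by
      show Finite (Vt (n+1) ⊕ Unit)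
      infer_instance
    have hcard : ({xv, yv, zv} : Set ((Apr (n+1)).carrier)).ncard = 3 := by
      rw [Set.ncard_insert_of_notMem
          (by rintro (h | h); exacts [hxy_ne h, hxz_ne h]) (Set.toFinite _),
        Set.ncard_insert_of_notMem (by rintro h; exact hyz_ne h) (Set.toFinite _),
        Set.ncard_singleton]
    have hle : ({xv, yv, zv} : Set ((Apr (n+1)).carrier)).ncard ≤ (D.bag i).ncard :=
      Set.ncard_le_ncard hsub (Set.toFinite _)
    have := hbags i
    omega
  obtain ⟨i12, hi12x, hi12y⟩ := D.mem_edge _ _ hExy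
  obtain ⟨i13, hi13x, hi13z⟩ := D.mem_edge _ _ hExz
  obtain ⟨i23, hi23y, hi23z⟩ := D.mem_edge _ _ hEyz
  -- path from i12 to i23 inside the y-bags, etc.
  obtain ⟨W1, hW1p, hW1s⟩ := path_in_connected (D.subtree yv) hi12y hi23y
  obtain ⟨W2, hW2p, hW2s⟩ := path_in_connected (D.subtree zv) hi23z hi13z
  obtain ⟨W3, hW3p, hW3s⟩ := path_in_connected (D.subtree xv) hi12x hi13x
  -- W3 = bypass of W1 ++ W2 by path uniqueness
  have hQ : (⟨W3, hW3p⟩ : T.Path i12 i13) =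
      ⟨(W1.append W2).bypass, SimpleGraph.Walk.bypass_isPath _⟩ :=
    hT.IsAcyclic.path_unique _ _
  have hW3eq : W3 = (W1.append W2).bypass := congrArg Subtype.val hQ
  have hW3yz : ∀ x ∈ W3.support, (yv ∈ D.bag x) ∨ (zv ∈ D.bag x) := by
    intro x hx
    rw [hW3eq] at hx
    have hx2 := SimpleGraph.Walk.support_bypass_subset _ hx
    rw [SimpleGraph.Walk.mem_support_append_iff] at hx2
    rcases hx2 with hx2 | hx2
    · exact Or.inl (hW1s x hx2)
    · exact Or.inr (hW2s x hx2)
  obtain ⟨u, v, huv, hus, hvs, hpu, hqv⟩ := crossing W3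
    (fun i => yv ∈ D.bag i) (fun i => zv ∈ D.bag i) hi12y hi13z hW3yz
    (fun x hx hpq => hnotriple x ⟨hW3s x hx, hpq.1, hpq.2⟩)
  -- u has bags x,y ; v has bags x,z
  have hux : xv ∈ D.bag u := hW3s u hus
  have hvx : xv ∈ D.bag v := hW3s v hvs
  obtain ⟨Wu, hWup, hWus⟩ := path_in_connected (D.subtree yv) hpu hi23y
  obtain ⟨Wv, hWvp, hWvs⟩ := path_in_connected (D.subtree zv) hqv hi23z
  rcases tree_edge_path hT huv Wv hWvp Wu hWup with hm | hm
  · exact hnotriple u ⟨hux, hpu, hWvs u hm⟩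
  · exact hnotriple v ⟨hvx, hWus v hm, hqv⟩

lemma twLe_mono {V : Type} {G : SimpleGraph V} {w w' : ℕ} (h : w ≤ w')
    (ht : twLe G w) : twLe G w' := by
  obtain ⟨ι, T, hT, D, hb⟩ := ht
  exact ⟨ι, T, hT, D, fun i => le_trans (hb i) (by omega)⟩

/-- for every n there is a finite structure A with a single
ternary relation symbol such that tw(G_A) = 2 and ucw(A) > n. -/
theorem stmt8 (n : ℕ) :
    ∃ A : CStruc sigTernary, Finite A.carrier ∧ (∀ a, A.col a = 0) ∧
      tw A.gaifman = 2 ∧ n < ucw A := by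
  refine ⟨Apr (n+1), ?_, ?_, ?_, ?_⟩
  · show Finite (Vt (n+1) ⊕ Unit)
    infer_instance
  · exact fun a => rfl
  · have h2 : twLe (Apr (n+1)).gaifman 2 := twle2 (n+1)
    have hne : {w | twLe (Apr (n+1)).gaifman w}.Nonempty := ⟨2, h2⟩
    have hmem := Nat.sInf_mem hne
    have hge : 2 ≤ sInf {w | twLe (Apr (n+1)).gaifman w} := by
      by_contra hlt
      push_neg at hlt
      have hle1 : sInf {w | twLe (Apr (n+1)).gaifman w} ≤ 1 := by omega
      exact no_twle1 n (twLe_mono hle1 hmem)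
    exact le_antisymm (Nat.sInf_le h2) hge
  · have hupper := ucw_upper (n+1)
    have hne : {k | UCW sigTernary k (Apr (n+1))}.Nonempty := ⟨_, hupper⟩
    have hmem := Nat.sInf_mem hne
    have hlow := ucw_lower n _ hmem
    show n < sInf {k | UCW sigTernary k (Apr (n+1))}
    omega
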